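/- Let G be a finite connected graph with injective edge weights, S ⊆ V, and process the edges in decreasing weight order, deleting an edge e if (a) e lies on a cycle of the current graph, or (b) e lies on a path between two distinct vertices of S in the current graph. The final graph equals the invasion percolation forest F(G,S) (equivalently, the output of Kruskal's algorithm restricted by S). -/

import Mathlib

open SimpleGraph

variable {V : Type*}

/-- `ed` lists the `m` edges of `G` in increasing order of weight `w`. -/
def IsEdgeListing (G : SimpleGraph V) (w : Sym2 V → ℝ) (m : ℕ) (ed : ℕ → V × V) : Prop :=
  (∀ i < m, G.Adj (ed i).1 (ed i).2) ∧
  (∀ i j : ℕ, i < j → j < m → w s((ed i).1, (ed i).2) < w s((ed j).1, (ed j).2)) ∧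
  (∀ x y : V, G.Adj x y → ∃ i < m, s((ed i).1, (ed i).2) = s(x, y))

-- Kruskal's algorithm restricted by the starting set `S`: process the edges
-- `ed 0, ed 1, ...` in order; add an edge iff it joins distinct components and the two
-- endpoint components do not both contain elements of `S`.
open scoped Classical in
noncomputable def kruskalF (S : Set V) (ed : ℕ → V × V) : ℕ → SimpleGraph V
  | 0 => ⊥
  | i + 1 =>
    let F := kruskalF S ed i
    if (¬ F.Reachable (ed i).1 (ed i).2) ∧
        ¬ ((∃ a ∈ S, F.Reachable a (ed i).1) ∧ (∃ b ∈ S, F.Reachable b (ed i).2))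
    then F ⊔ SimpleGraph.fromEdgeSet {s((ed i).1, (ed i).2)}
    else F

-- The path-and-cycle-breaking process: starting from `G0`, process the edges in
-- decreasing weight order (`ed (m-1)`, `ed (m-2)`, ...); delete the current edge if it
-- lies on a cycle of the current graph, or on a path between two distinct vertices of
-- `S` in the current graph.
open scoped Classical in
noncomputable def breakProc (S : Set V) (ed : ℕ → V × V) (m : ℕ)
    (G0 : SimpleGraph V) : ℕ → SimpleGraph V
  | 0 => G0
  | i + 1 =>
    let H := breakProc S ed m G0 i
    let e : Sym2 V := s((ed (m - 1 - i)).1, (ed (m - 1 - i)).2)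
    if (∃ z : V, ∃ c : H.Walk z z, c.IsCycle ∧ e ∈ c.edges) ∨
        (∃ u ∈ S, ∃ v ∈ S, u ≠ v ∧ ∃ p : H.Walk u v, p.IsPath ∧ e ∈ p.edges)
    then H.deleteEdges {e}
    else H

namespace BreakKruskalAux

/-- The acceptance condition of Kruskal's algorithm at step `t`. -/
def kept (S : Set V) (ed : ℕ → V × V) (t : ℕ) : Prop :=
  (¬ (kruskalF S ed t).Reachable (ed t).1 (ed t).2) ∧
    ¬ ((∃ a ∈ S, (kruskalF S ed t).Reachable a (ed t).1) ∧
       (∃ b ∈ S, (kruskalF S ed t).Reachable b (ed t).2))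

lemma kruskal_zero {S : Set V} {ed : ℕ → V × V} : kruskalF S ed 0 = ⊥ := rfl

lemma kruskal_succ_pos {S : Set V} {ed : ℕ → V × V} {t : ℕ} (h : kept S ed t) :
    kruskalF S ed (t + 1) = kruskalF S ed t ⊔ fromEdgeSet {s((ed t).1, (ed t).2)} := by
  simp only [kruskalF]
  exact if_pos h

lemma kruskal_succ_neg {S : Set V} {ed : ℕ → V × V} {t : ℕ} (h : ¬ kept S ed t) :
    kruskalF S ed (t + 1) = kruskalF S ed t := by
  simp only [kruskalF]
  exact if_neg h

lemma kruskal_mono {S : Set V} {ed : ℕ → V × V} {s t : ℕ} (h : s ≤ t) :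
    kruskalF S ed s ≤ kruskalF S ed t := by
  induction t with
  | zero => simp_all
  | succ t ih =>
    rcases Nat.lt_or_ge s (t + 1) with h' | h'
    · refine le_trans (ih (by omega)) ?_
      by_cases hk : kept S ed t
      · rw [kruskal_succ_pos hk]; exact le_sup_left
      · rw [kruskal_succ_neg hk]
    · have : s = t + 1 := by omega
      subst this; exact le_rfl

/-- The graph whose edges are the `ed j` with `P j`. -/
def selG (ed : ℕ → V × V) (P : ℕ → Prop) : SimpleGraph V :=
  fromEdgeSet {x | ∃ j, P j ∧ x = s((ed j).1, (ed j).2)}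

lemma selG_adj {ed : ℕ → V × V} {P : ℕ → Prop} {x y : V} :
    (selG ed P).Adj x y ↔
      (∃ j, P j ∧ s(x, y) = s((ed j).1, (ed j).2)) ∧ x ≠ y := by
  simp [selG, fromEdgeSet_adj, Set.mem_setOf_eq]

lemma selG_mono {ed : ℕ → V × V} {P Q : ℕ → Prop} (h : ∀ j, P j → Q j) :
    selG ed P ≤ selG ed Q :=
  fromEdgeSet_mono (by rintro x ⟨j, hj, he⟩; exact ⟨j, h j hj, he⟩)

/-- Kruskal's forest at time `t` as a selection graph. -/
lemma kruskal_eq_selG (S : Set V) (ed : ℕ → V × V) :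
    ∀ t, kruskalF S ed t = selG ed fun j => j < t ∧ kept S ed j := by
  intro t
  induction t with
  | zero =>
    ext x y
    simp [kruskal_zero, selG]
  | succ t ih =>
    by_cases h : kept S ed t
    · rw [kruskal_succ_pos h, ih]
      ext x y
      simp only [sup_adj, selG_adj, fromEdgeSet_adj, Set.mem_singleton_iff]
      constructor
      · rintro (⟨⟨j, ⟨hjt, hkj⟩, he⟩, hne⟩ | ⟨he, hne⟩)
        · exact ⟨⟨j, ⟨by omega, hkj⟩, he⟩, hne⟩
        · exact ⟨⟨t, ⟨by omega, h⟩, he⟩, hne⟩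
      · rintro ⟨⟨j, ⟨hjt, hkj⟩, he⟩, hne⟩
        rcases Nat.lt_or_ge j t with hj | hj
        · exact Or.inl ⟨⟨j, ⟨hj, hkj⟩, he⟩, hne⟩
        · have hjt' : j = t := by omega
          subst hjt'
          exact Or.inr ⟨he, hne⟩
    · rw [kruskal_succ_neg h, ih]
      have hPQ : (fun j => j < t ∧ kept S ed j) = fun j => j < t + 1 ∧ kept S ed j := by
        funext j
        apply propext
        constructor
        · rintro ⟨h1, h2⟩; exact ⟨by omega, h2⟩
        · rintro ⟨h1, h2⟩
          refine ⟨?_, h2⟩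
          rcases Nat.lt_or_ge j t with h3 | h3
          · exact h3
          · have : j = t := by omega
            subst this; exact absurd h2 h
      rw [hPQ]

/-- Decomposition of reachability after adding a single edge. -/
lemma reachable_sup_edge {F : SimpleGraph V} {a b x y : V}
    (h : (F ⊔ fromEdgeSet {s(a, b)}).Reachable x y) :
    F.Reachable x y ∨ (F.Reachable x a ∧ F.Reachable b y) ∨
      (F.Reachable x b ∧ F.Reachable a y) := by
  obtain ⟨p⟩ := h
  induction p with
  | nil => exact Or.inl (Reachable.refl _)
  | @cons u c w h' p ih =>
    have h'' : F.Adj u c ∨ (s(u, c) = s(a, b) ∧ u ≠ c) := by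
      simpa [fromEdgeSet_adj] using h'
    rcases h'' with hF | ⟨he, hne⟩
    · rcases ih with h1 | ⟨h1, h2⟩ | ⟨h1, h2⟩
      · exact Or.inl (hF.reachable.trans h1)
      · exact Or.inr (Or.inl ⟨hF.reachable.trans h1, h2⟩)
      · exact Or.inr (Or.inr ⟨hF.reachable.trans h1, h2⟩)
    · rcases Sym2.eq_iff.mp he with ⟨hx, hy⟩ | ⟨hx, hy⟩
      · subst hx; subst hy
        rcases ih with h1 | ⟨h1, h2⟩ | ⟨h1, h2⟩
        · exact Or.inr (Or.inl ⟨Reachable.refl _, h1⟩)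
        · exact Or.inr (Or.inl ⟨Reachable.refl _, h2⟩)
        · exact Or.inl h2
      · subst hx; subst hy
        rcases ih with h1 | ⟨h1, h2⟩ | ⟨h1, h2⟩
        · exact Or.inr (Or.inr ⟨Reachable.refl _, h1⟩)
        · exact Or.inl h2
        · exact Or.inl (h1.symm.trans h2)

/-- Distinct vertices of `S` are never joined by the restricted Kruskal forest. -/
lemma S_sep (S : Set V) (ed : ℕ → V × V) :
    ∀ t, ∀ s1 ∈ S, ∀ s2 ∈ S, (kruskalF S ed t).Reachable s1 s2 → s1 = s2 := by
  intro t
  induction t with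
  | zero =>
    intro s1 _ s2 _ h
    rw [kruskal_zero] at h
    exact reachable_bot.mp h
  | succ t ih =>
    intro s1 hs1 s2 hs2 hr
    by_cases h : kept S ed t
    · rw [kruskal_succ_pos h] at hr
      rcases reachable_sup_edge hr with h1 | ⟨h1, h2⟩ | ⟨h1, h2⟩
      · exact ih s1 hs1 s2 hs2 h1
      · exact absurd ⟨⟨s1, hs1, h1⟩, ⟨s2, hs2, h2.symm⟩⟩ h.2
      · exact absurd ⟨⟨s2, hs2, h2.symm⟩, ⟨s1, hs1, h1⟩⟩ h.2
    · rw [kruskal_succ_neg h] at hr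
      exact ih s1 hs1 s2 hs2 hr

/-- Every edge accepted by Kruskal remains a bridge of the final forest. -/
lemma not_reach_deleteEdges {S : Set V} {ed : ℕ → V × V} {m t : ℕ} {G : SimpleGraph V}
    (hadj : ∀ i < m, G.Adj (ed i).1 (ed i).2)
    (ht : t < m) (hk : kept S ed t) :
    ∀ j, ¬ ((kruskalF S ed j).deleteEdges
      {s((ed t).1, (ed t).2)}).Reachable (ed t).1 (ed t).2 := by
  have hne : (ed t).1 ≠ (ed t).2 := (hadj t ht).ne
  have hbase : ∀ j, j ≤ t + 1 → ¬ ((kruskalF S ed j).deleteEdges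
      {s((ed t).1, (ed t).2)}).Reachable (ed t).1 (ed t).2 := by
    intro j hj hr
    have hle : (kruskalF S ed j).deleteEdges {s((ed t).1, (ed t).2)} ≤ kruskalF S ed t := by
      intro x y hxy
      simp only [deleteEdges_adj, Set.mem_singleton_iff] at hxy
      have h1 : (kruskalF S ed (t + 1)).Adj x y := kruskal_mono hj hxy.1
      rw [kruskal_succ_pos hk] at h1
      rcases (by simpa [fromEdgeSet_adj] using h1 :
          (kruskalF S ed t).Adj x y ∨ (s(x, y) = s((ed t).1, (ed t).2) ∧ x ≠ y)) with h2 | h2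
      · exact h2
      · exact absurd h2.1 hxy.2
    exact hk.1 (hr.mono hle)
  intro j
  rcases Nat.lt_or_ge j (t + 2) with hj | hj
  · exact hbase j (by omega)
  · have key : ∀ j, t + 1 ≤ j → ¬ ((kruskalF S ed j).deleteEdges
        {s((ed t).1, (ed t).2)}).Reachable (ed t).1 (ed t).2 := by
      intro j hj
      induction j, hj using Nat.le_induction with
      | base => exact hbase (t + 1) le_rfl
      | succ j hj ih =>
        intro hr
        by_cases hkj : kept S ed j
        · rw [kruskal_succ_pos hkj] at hr
          have hle : (kruskalF S ed j ⊔ fromEdgeSet {s((ed j).1, (ed j).2)}).deleteEdges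
              {s((ed t).1, (ed t).2)} ≤
              ((kruskalF S ed j).deleteEdges {s((ed t).1, (ed t).2)}) ⊔
                fromEdgeSet {s((ed j).1, (ed j).2)} := by
            intro x y hxy
            simp only [deleteEdges_adj, sup_adj, fromEdgeSet_adj,
              Set.mem_singleton_iff] at hxy ⊢
            tauto
          have hab : (kruskalF S ed j).Adj (ed t).1 (ed t).2 := by
            have h1 : (kruskalF S ed (t + 1)).Adj (ed t).1 (ed t).2 := by
              rw [kruskal_succ_pos hk]
              right
              simp [fromEdgeSet_adj, hne]
            exact kruskal_mono hj h1
          rcases reachable_sup_edge (hr.mono hle) with h1 | ⟨h1, h2⟩ | ⟨h1, h2⟩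
          · exact ih h1
          · have h1' := h1.mono (deleteEdges_le _)
            have h2' := h2.mono (deleteEdges_le _)
            exact hkj.1 (h1'.symm.trans (hab.reachable.trans h2'.symm))
          · have h1' := h1.mono (deleteEdges_le _)
            have h2' := h2.mono (deleteEdges_le _)
            exact hkj.1 (h2'.trans (hab.symm.reachable.trans h1'))
        · rw [kruskal_succ_neg hkj] at hr
          exact ih hr
    exact key j (by omega)

/-- Splitting a trail at one of its edges. -/
lemma walk_split {X : SimpleGraph V} {a b : V} : ∀ {u v : V} (p : X.Walk u v),
    p.edges.Nodup → s(a, b) ∈ p.edges →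
    ((X.deleteEdges {s(a, b)}).Reachable u a ∧ (X.deleteEdges {s(a, b)}).Reachable b v) ∨
      ((X.deleteEdges {s(a, b)}).Reachable u b ∧ (X.deleteEdges {s(a, b)}).Reachable a v)
  | _, _, SimpleGraph.Walk.nil, _, he => by simp at he
  | u, v, SimpleGraph.Walk.cons (v := c) h' p, hnd, he => by
    rw [SimpleGraph.Walk.edges_cons, List.nodup_cons] at hnd
    rcases List.mem_cons.mp he with heq | he'
    · have hfree : ∀ e' ∈ p.edges, e' ∉ ({s(a, b)} : Set (Sym2 V)) := by
        intro e' h1 h2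
        rw [Set.mem_singleton_iff] at h2
        subst h2
        rw [heq] at h1
        exact hnd.1 h1
      have hrp : (X.deleteEdges {s(a, b)}).Reachable c v := ⟨p.toDeleteEdges _ hfree⟩
      rcases Sym2.eq_iff.mp heq.symm with ⟨hx, hy⟩ | ⟨hx, hy⟩
      · subst hx; subst hy; exact Or.inl ⟨Reachable.refl _, hrp⟩
      · subst hx; subst hy; exact Or.inr ⟨Reachable.refl _, hrp⟩
    · have hne' : s(u, c) ≠ s(a, b) := fun hh => hnd.1 (hh ▸ he')
      have hadj' : (X.deleteEdges {s(a, b)}).Adj u c := by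
        rw [deleteEdges_adj]
        exact ⟨h', by simp [hne']⟩
      rcases walk_split p hnd.2 he' with ⟨h1, h2⟩ | ⟨h1, h2⟩
      · exact Or.inl ⟨hadj'.reachable.trans h1, h2⟩
      · exact Or.inr ⟨hadj'.reachable.trans h1, h2⟩

/-- Transferring reachability along a per-edge relation. -/
lemma reachable_rel {Y X : SimpleGraph V} {S : Set V}
    (h : ∀ x y, Y.Adj x y → X.Reachable x y ∨
      ((∃ s ∈ S, X.Reachable s x) ∧ (∃ s ∈ S, X.Reachable s y)))
    {u v : V} (hr : Y.Reachable u v) :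
    X.Reachable u v ∨ ((∃ s ∈ S, X.Reachable s u) ∧ (∃ s ∈ S, X.Reachable s v)) := by
  obtain ⟨p⟩ := hr
  induction p with
  | nil => exact Or.inl (Reachable.refl _)
  | @cons u c w h' p ih =>
    have h1 := h _ _ h'
    rcases h1 with h1 | ⟨⟨s1, hs1, hr1⟩, ⟨s2, hs2, hr2⟩⟩
    · rcases ih with h2 | ⟨⟨s2, hs2, hr2⟩, hsv⟩
      · exact Or.inl (h1.trans h2)
      · exact Or.inr ⟨⟨s2, hs2, hr2.trans h1.symm⟩, hsv⟩
    · rcases ih with h2 | ⟨_, hsv⟩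
      · exact Or.inr ⟨⟨s1, hs1, hr1⟩, ⟨s2, hs2, hr2.trans h2⟩⟩
      · exact Or.inr ⟨⟨s1, hs1, hr1⟩, hsv⟩

lemma mapLe_support {G G' : SimpleGraph V} (h : G ≤ G') {u v : V} (p : G.Walk u v) :
    (p.mapLe h).support = p.support := by
  induction p with
  | nil => rfl
  | cons ha p ih =>
    simp only [SimpleGraph.Walk.mapLe, SimpleGraph.Walk.map_cons,
      SimpleGraph.Walk.support_cons] at *
    rw [ih]

/-- The core step equivalence: the deletion condition for the edge `ed t` in the
current graph of the deletion process holds iff Kruskal rejects `ed t`. -/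
lemma core_iff [DecidableEq V] {G : SimpleGraph V} {m : ℕ} {ed : ℕ → V × V} (S : Set V)
    (hadj : ∀ i < m, G.Adj (ed i).1 (ed i).2)
    (hinj : ∀ i < m, ∀ j < m, s((ed i).1, (ed i).2) = s((ed j).1, (ed j).2) → i = j)
    {t : ℕ} (ht : t < m) :
    ((∃ z : V, ∃ c : (selG ed fun j => j < m ∧ (j < t + 1 ∨ kept S ed j)).Walk z z,
        c.IsCycle ∧ s((ed t).1, (ed t).2) ∈ c.edges) ∨
      (∃ u ∈ S, ∃ v ∈ S, u ≠ v ∧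
        ∃ p : (selG ed fun j => j < m ∧ (j < t + 1 ∨ kept S ed j)).Walk u v,
          p.IsPath ∧ s((ed t).1, (ed t).2) ∈ p.edges)) ↔ ¬ kept S ed t := by
  set Ht := selG ed fun j => j < m ∧ (j < t + 1 ∨ kept S ed j) with hHt
  set H' := selG ed fun j => j < m ∧ j ≠ t ∧ (j < t ∨ kept S ed j) with hH'
  set F' := selG ed fun j => j < m ∧ j ≠ t ∧ kept S ed j with hF'
  have hne_ab : (ed t).1 ≠ (ed t).2 := (hadj t ht).ne
  have hHt_ab : Ht.Adj (ed t).1 (ed t).2 :=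
    selG_adj.mpr ⟨⟨t, ⟨ht, Or.inl (by omega)⟩, rfl⟩, hne_ab⟩
  have hdel : Ht.deleteEdges {s((ed t).1, (ed t).2)} = H' := by
    ext x y
    simp only [deleteEdges_adj, Set.mem_singleton_iff, hHt, hH', selG_adj]
    constructor
    · rintro ⟨⟨⟨j, ⟨hjm, hcond⟩, he⟩, hxy⟩, hnot⟩
      have hjt : j ≠ t := by
        rintro rfl
        exact hnot he
      refine ⟨⟨j, ⟨hjm, hjt, ?_⟩, he⟩, hxy⟩
      rcases hcond with h | h
      · exact Or.inl (by omega)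
      · exact Or.inr h
    · rintro ⟨⟨j, ⟨hjm, hjt, hcond⟩, he⟩, hxy⟩
      refine ⟨⟨⟨j, ⟨hjm, ?_⟩, he⟩, hxy⟩, ?_⟩
      · rcases hcond with h | h
        · exact Or.inl (by omega)
        · exact Or.inr h
      · intro hcon
        exact hjt (hinj j hjm t ht (he.symm.trans hcon))
  have hcyc : (∃ z : V, ∃ c : Ht.Walk z z, c.IsCycle ∧ s((ed t).1, (ed t).2) ∈ c.edges) ↔
      H'.Reachable (ed t).1 (ed t).2 := by
    constructor
    · intro h
      have h2 := (adj_and_reachable_delete_edges_iff_exists_cycle.mpr h).2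
      rwa [hdel] at h2
    · intro h
      exact adj_and_reachable_delete_edges_iff_exists_cycle.mp
        ⟨hHt_ab, by rwa [hdel]⟩
  constructor
  · -- delete condition implies Kruskal rejects... by contradiction: kept t gives False
    intro hcond hk
    -- preliminary facts under `kept t`
    have hF'Km : F' ≤ kruskalF S ed m := by
      rw [kruskal_eq_selG]
      exact selG_mono (by rintro j ⟨h1, _, h3⟩; exact ⟨h1, h3⟩)
    have hF'del : F' ≤ (kruskalF S ed m).deleteEdges {s((ed t).1, (ed t).2)} := by
      intro x y hxy
      have hxy' := hxy
      rw [hF', selG_adj] at hxy'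
      obtain ⟨⟨j, ⟨hjm, hjt, hkj⟩, he⟩, hne⟩ := hxy'
      rw [deleteEdges_adj]
      refine ⟨hF'Km hxy, ?_⟩
      simp only [Set.mem_singleton_iff]
      intro hcon
      exact hjt (hinj j hjm t ht (he.symm.trans hcon))
    have hedge : ∀ x y, H'.Adj x y → F'.Reachable x y ∨
        ((∃ s ∈ S, F'.Reachable s x) ∧ (∃ s ∈ S, F'.Reachable s y)) := by
      intro x y hxy
      rw [hH', selG_adj] at hxy
      obtain ⟨⟨j, ⟨hjm, hjt, hcond'⟩, he⟩, hne⟩ := hxy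
      by_cases hkj : kept S ed j
      · exact Or.inl (selG_adj.mpr ⟨⟨j, ⟨hjm, hjt, hkj⟩, he⟩, hne⟩).reachable
      · have hjlt : j < t := hcond'.resolve_right hkj
        have hKjF' : kruskalF S ed j ≤ F' := by
          rw [kruskal_eq_selG]
          exact selG_mono (by rintro i ⟨h1, h2⟩; exact ⟨by omega, by omega, h2⟩)
        rcases not_and_or.mp hkj with h1 | h2
        · have hRab := not_not.mp h1
          rcases Sym2.eq_iff.mp he with ⟨hx, hy⟩ | ⟨hx, hy⟩
          · subst hx; subst hy; exact Or.inl (hRab.mono hKjF')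
          · subst hx; subst hy; exact Or.inl ((hRab.mono hKjF').symm)
        · obtain ⟨⟨sa, hsa, hra⟩, ⟨sb, hsb, hrb⟩⟩ := not_not.mp h2
          rcases Sym2.eq_iff.mp he with ⟨hx, hy⟩ | ⟨hx, hy⟩
          · subst hx; subst hy
            exact Or.inr ⟨⟨sa, hsa, hra.mono hKjF'⟩, ⟨sb, hsb, hrb.mono hKjF'⟩⟩
          · subst hx; subst hy
            exact Or.inr ⟨⟨sb, hsb, hrb.mono hKjF'⟩, ⟨sa, hsa, hra.mono hKjF'⟩⟩
    have finR : F'.Reachable (ed t).1 (ed t).2 → False := by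
      intro hF
      exact not_reach_deleteEdges hadj ht hk m (hF.mono hF'del)
    have hKm_ab : (kruskalF S ed m).Adj (ed t).1 (ed t).2 := by
      rw [kruskal_eq_selG]
      exact selG_adj.mpr ⟨⟨t, ⟨ht, hk⟩, rfl⟩, hne_ab⟩
    have final : (∃ s ∈ S, F'.Reachable s (ed t).1) →
        (∃ s ∈ S, F'.Reachable s (ed t).2) → False := by
      rintro ⟨s1, hs1, h1⟩ ⟨s2, hs2, h2⟩
      by_cases h12 : s1 = s2
      · subst h12
        exact finR (h1.symm.trans h2)
      · exact h12 (S_sep S ed m s1 hs1 s2 hs2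
          ((h1.mono hF'Km).trans (hKm_ab.reachable.trans (h2.mono hF'Km).symm)))
    rcases hcond with hcycle | hpath
    · have hab' : H'.Reachable (ed t).1 (ed t).2 := hcyc.mp hcycle
      rcases reachable_rel hedge hab' with hF | ⟨hA, hB⟩
      · exact finR hF
      · exact final hA hB
    · obtain ⟨u, hu, v, hv, huv, p, hp, hep⟩ := hpath
      have hsplit := walk_split p hp.isTrail.edges_nodup hep
      rw [show Ht.deleteEdges {s((ed t).1, (ed t).2)} = H' from hdel] at hsplit
      have scompA : H'.Reachable u (ed t).1 ∨ H'.Reachable u (ed t).2 → True := fun _ => trivial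
      rcases hsplit with ⟨h1, h2⟩ | ⟨h1, h2⟩
      · -- u ~ a, b ~ v
        have hA : ∃ s ∈ S, F'.Reachable s (ed t).1 := by
          rcases reachable_rel hedge h1 with hF | ⟨_, hB⟩
          · exact ⟨u, hu, hF⟩
          · exact hB
        have hB : ∃ s ∈ S, F'.Reachable s (ed t).2 := by
          rcases reachable_rel hedge h2.symm with hF | ⟨_, hB⟩
          · exact ⟨v, hv, hF⟩
          · exact hB
        exact final hA hB
      · -- u ~ b, a ~ v
        have hB : ∃ s ∈ S, F'.Reachable s (ed t).2 := by
          rcases reachable_rel hedge h1 with hF | ⟨_, hB⟩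
          · exact ⟨u, hu, hF⟩
          · exact hB
        have hA : ∃ s ∈ S, F'.Reachable s (ed t).1 := by
          rcases reachable_rel hedge h2.symm with hF | ⟨_, hB⟩
          · exact ⟨v, hv, hF⟩
          · exact hB
        exact final hA hB
  · -- Kruskal rejects implies delete condition
    intro hnk
    have hKtH' : kruskalF S ed t ≤ H' := by
      rw [kruskal_eq_selG]
      exact selG_mono (by rintro j ⟨h1, h2⟩; exact ⟨by omega, by omega, Or.inl h1⟩)
    rcases not_and_or.mp hnk with h1 | h2
    · exact Or.inl (hcyc.mpr ((not_not.mp h1).mono hKtH'))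
    · obtain ⟨⟨s1, hs1, hr1⟩, ⟨s2, hs2, hr2⟩⟩ := not_not.mp h2
      by_cases hab : H'.Reachable (ed t).1 (ed t).2
      · exact Or.inl (hcyc.mpr hab)
      · have hr1' : H'.Reachable s1 (ed t).1 := hr1.mono hKtH'
        have hr2' : H'.Reachable s2 (ed t).2 := hr2.mono hKtH'
        have hs12 : s1 ≠ s2 := by
          rintro rfl
          exact hab (hr1'.symm.trans hr2')
        obtain ⟨q1raw⟩ := hr1'
        obtain ⟨q2raw⟩ := hr2'.symm
        let q1 := q1raw.toPath
        let q2 := q2raw.toPath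
        -- q1 : H'.Path s1 (ed t).1 ; q2 : H'.Path (ed t).2 s2
        have hle' : H' ≤ Ht := by
          rw [hH', hHt]
          exact selG_mono (by
            rintro j ⟨hjm, hjt, hc⟩
            exact ⟨hjm, hc.imp_left (by omega)⟩)
        have hdis : ∀ x, x ∈ (q1 : H'.Walk s1 (ed t).1).support →
            x ∈ (q2 : H'.Walk (ed t).2 s2).support → False := by
          intro x hx1 hx2
          have hxa : H'.Reachable x (ed t).1 := ⟨(q1 : H'.Walk s1 (ed t).1).dropUntil x hx1⟩
          have hbx : H'.Reachable (ed t).2 x := ⟨(q2 : H'.Walk (ed t).2 s2).takeUntil x hx2⟩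
          exact hab (hxa.symm.trans hbx.symm)
        refine Or.inr ⟨s1, hs1, s2, hs2, hs12,
          ((q1 : H'.Walk s1 (ed t).1).mapLe hle').append
            (SimpleGraph.Walk.cons hHt_ab ((q2 : H'.Walk (ed t).2 s2).mapLe hle')), ?_, ?_⟩
        · rw [SimpleGraph.Walk.isPath_def, SimpleGraph.Walk.support_append,
            SimpleGraph.Walk.support_cons, List.tail_cons]
          rw [mapLe_support, mapLe_support]
          refine List.Nodup.append ?_ ?_ ?_
          · exact q1.2.support_nodup
          · exact q2.2.support_nodup
          · exact fun x hx1 hx2 => hdis x hx1 hx2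
        · rw [SimpleGraph.Walk.edges_append, List.mem_append]
          right
          rw [SimpleGraph.Walk.edges_cons]
          exact List.mem_cons_self

end BreakKruskalAux

open BreakKruskalAux in
/-- For a finite connected graph `G` with injective edge weights and a
starting set `S`, the path-and-cycle-breaking process (processing edges in decreasing
weight order, deleting an edge if it lies on a cycle or on a path between two distinct
vertices of `S` in the current graph) terminates in the invasion percolation forest
`F(G,S)`, i.e. in the output of Kruskal's algorithm restricted by `S`. -/
theorem breakProc_eq_kruskal [Fintype V] [DecidableEq V] (G : SimpleGraph V)
    (w : Sym2 V → ℝ) (hw : Set.InjOn w G.edgeSet) (hG : G.Connected)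
    (m : ℕ) (ed : ℕ → V × V) (hed : IsEdgeListing G w m ed) (S : Set V) :
    breakProc S ed m G m = kruskalF S ed m := by
  obtain ⟨hadj, hord, hsurj⟩ := hed
  have hinj : ∀ i < m, ∀ j < m, s((ed i).1, (ed i).2) = s((ed j).1, (ed j).2) → i = j := by
    intro i hi j hj he
    by_contra hne
    rcases Nat.lt_or_ge i j with h | h
    · exact absurd (hord i j h hj) (by rw [he]; exact lt_irrefl _)
    · have h' : j < i := by omega
      exact absurd (hord j i (by omega) hi) (by rw [he]; exact lt_irrefl _)
  have inv : ∀ i, i ≤ m →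
      breakProc S ed m G i = selG ed fun j => j < m ∧ (j < m - i ∨ kept S ed j) := by
    intro i
    induction i with
    | zero =>
      intro _
      show G = _
      ext x y
      rw [selG_adj]
      constructor
      · intro hxy
        obtain ⟨j, hj, he⟩ := hsurj x y hxy
        exact ⟨⟨j, ⟨hj, Or.inl (by omega)⟩, he.symm⟩, hxy.ne⟩
      · rintro ⟨⟨j, ⟨hjm, _⟩, he⟩, hne⟩
        rcases Sym2.eq_iff.mp he with ⟨hx, hy⟩ | ⟨hx, hy⟩
        · subst hx; subst hy; exact hadj j hjm
        · subst hx; subst hy; exact (hadj j hjm).symm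
    | succ i ih =>
      intro hi1
      have htm : m - 1 - i < m := by omega
      have hIH := ih (by omega)
      simp only [breakProc]
      rw [hIH]
      rw [show m - i = (m - 1 - i) + 1 from by omega]
      have hcore := core_iff (ed := ed) S hadj hinj htm
      by_cases hk : kept S ed (m - 1 - i)
      · rw [if_neg (fun hc => (hcore.mp hc) hk)]
        have hPQ : (fun j => j < m ∧ (j < m - 1 - i + 1 ∨ kept S ed j)) =
            fun j => j < m ∧ (j < m - (i + 1) ∨ kept S ed j) := by
          funext j
          apply propext
          constructor
          · rintro ⟨h1, h2⟩
            refine ⟨h1, ?_⟩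
            rcases h2 with h2 | h2
            · rcases Nat.lt_or_ge j (m - 1 - i) with h3 | h3
              · exact Or.inl (by omega)
              · have : j = m - 1 - i := by omega
                subst this
                exact Or.inr hk
            · exact Or.inr h2
          · rintro ⟨h1, h2⟩
            exact ⟨h1, h2.imp_left (by omega)⟩
        rw [hPQ]
      · rw [if_pos (hcore.mpr hk)]
        ext x y
        simp only [deleteEdges_adj, selG_adj, Set.mem_singleton_iff]
        constructor
        · rintro ⟨⟨⟨j, ⟨hjm, hc⟩, he⟩, hne⟩, hnot⟩
          have hjt : j ≠ m - 1 - i := by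
            rintro rfl
            exact hnot he
          refine ⟨⟨j, ⟨hjm, ?_⟩, he⟩, hne⟩
          rcases hc with h | h
          · exact Or.inl (by omega)
          · exact Or.inr h
        · rintro ⟨⟨j, ⟨hjm, hc⟩, he⟩, hne⟩
          refine ⟨⟨⟨j, ⟨hjm, hc.imp_left (by omega)⟩, he⟩, hne⟩, ?_⟩
          intro hcon
          have hj : j = m - 1 - i := hinj j hjm (m - 1 - i) htm (he.symm.trans hcon)
          subst hj
          rcases hc with h | h
          · omega
          · exact hk h
  have hfin := inv m le_rfl
  rw [hfin, kruskal_eq_selG]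
  have hPQ : (fun j => j < m ∧ (j < m - m ∨ kept S ed j)) =
      fun j => j < m ∧ kept S ed j := by
    funext j
    apply propext
    constructor
    · rintro ⟨h1, h2⟩
      exact ⟨h1, h2.resolve_left (by omega)⟩
    · rintro ⟨h1, h2⟩
      exact ⟨h1, Or.inr h2⟩
  rw [hPQ]
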